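/- Let (X,Σ_X) and (Y,Σ_Y) be measurable spaces, f₁,…,f_k : X → Y measurable maps, and λ₁,…,λ_k ∈ ℝ such that for every x ∈ X the formal linear combination Σᵢ λᵢ·δ_{fᵢ(x)} is the zero element of the free real vector space on Y (equivalently, for every y ∈ Y, Σ_{i : fᵢ(x)=y} λᵢ = 0). Then for every finite signed measure μ on X, the signed measure Σᵢ λᵢ·(fᵢ)_*μ on Y is zero. -/

import Mathlib

open scoped Classical

open MeasureTheory

private lemma sum_indic_zero {X Y : Type*} (k : ℕ) (f : Fin k → X → Y)
    (lam : Fin k → ℝ)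
    (hzero : ∀ (x : X) (y : Y), (∑ i, if f i x = y then lam i else 0) = 0)
    (A : Set Y) (x : X) :
    (∑ i, if f i x ∈ A then lam i else 0) = 0 := by
  classical
  rw [← Finset.sum_fiberwise_of_maps_to (g := fun i => f i x) (t := Finset.univ.image fun i => f i x)
    (fun i _ => Finset.mem_image_of_mem _ (Finset.mem_univ i))]
  apply Finset.sum_eq_zero
  intro y _
  by_cases hy : y ∈ A
  · have h0 := hzero x y
    rw [← Finset.sum_filter] at h0
    rw [← h0]
    apply Finset.sum_congr rfl
    intro i hi
    simp only [Finset.mem_filter] at hi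
    rw [hi.2, if_pos hy]
  · apply Finset.sum_eq_zero
    intro i hi
    simp only [Finset.mem_filter] at hi
    rw [hi.2, if_neg hy]

private lemma sum_meas_zero {X Y : Type*} [MeasurableSpace X] [MeasurableSpace Y]
    (k : ℕ) (f : Fin k → X → Y) (hf : ∀ i, Measurable (f i))
    (lam : Fin k → ℝ)
    (hzero : ∀ (x : X) (y : Y), (∑ i, if f i x = y then lam i else 0) = 0)
    (ν : Measure X) [IsFiniteMeasure ν] {A : Set Y} (hA : MeasurableSet A) :
    (∑ i, lam i * (ν (f i ⁻¹' A)).toReal) = 0 := by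
  classical
  have hint : ∀ i : Fin k, Integrable ((f i ⁻¹' A).indicator fun _ => lam i) ν := by
    intro i
    exact (integrable_const (lam i)).indicator ((hf i) hA)
  have h1 : ∀ i : Fin k, ∫ x, (f i ⁻¹' A).indicator (fun _ => lam i) x ∂ν
      = lam i * (ν (f i ⁻¹' A)).toReal := by
    intro i
    rw [integral_indicator_const _ ((hf i) hA)]
    simp [mul_comm, measureReal_def]
  calc (∑ i, lam i * (ν (f i ⁻¹' A)).toReal)
      = ∑ i, ∫ x, (f i ⁻¹' A).indicator (fun _ => lam i) x ∂ν := by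
        exact (Finset.sum_congr rfl fun i _ => (h1 i)).symm
    _ = ∫ x, ∑ i, (f i ⁻¹' A).indicator (fun _ => lam i) x ∂ν :=
        (integral_finset_sum _ fun i _ => hint i).symm
    _ = 0 := by
        have : ∀ x, (∑ i, (f i ⁻¹' A).indicator (fun _ => lam i) x) = 0 := by
          intro x
          have := sum_indic_zero k f lam hzero A x
          rw [← this]
          apply Finset.sum_congr rfl
          intro i _
          by_cases h : f i x ∈ A
          · simp [Set.indicator, h]
          · simp [Set.indicator, h]
        simp only [this, integral_zero]

/-- Generalized Zastrow lemma: if the formal combination `Σ λᵢ δ_{fᵢ(x)}` vanishes for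
every `x`, then `Σ λᵢ (fᵢ)_* μ = 0` for every finite signed measure `μ`. -/
theorem stmt10 {X Y : Type*} [MeasurableSpace X] [MeasurableSpace Y]
    (k : ℕ) (f : Fin k → X → Y) (hf : ∀ i, Measurable (f i))
    (lam : Fin k → ℝ)
    (hzero : ∀ (x : X) (y : Y), (∑ i, if f i x = y then lam i else 0) = 0)
    (μ : SignedMeasure X) :
    (∑ i, lam i • (μ.map (f i))) = 0 := by
  ext A hA
  have hcoe : ⇑(∑ i, lam i • (μ.map (f i))) = ∑ i, ⇑(lam i • (μ.map (f i))) :=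
    map_sum (VectorMeasure.coeFnAddMonoidHom (SignedMeasure Y) (Set Y) ℝ) _ _
  rw [VectorMeasure.zero_apply]
  have : (∑ i, lam i • (μ.map (f i))) A = ∑ i, lam i * (μ (f i ⁻¹' A)) := by
    rw [show (∑ i, lam i • (μ.map (f i))) A = (∑ i, ⇑(lam i • (μ.map (f i)))) A from
      congrFun hcoe A, Finset.sum_apply]
    apply Finset.sum_congr rfl
    intro i _
    rw [VectorMeasure.smul_apply, VectorMeasure.map_apply _ (hf i) hA]
    rfl
  rw [this]
  -- Jordan decomposition
  set p := μ.toJordanDecomposition.posPart with hp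
  set n := μ.toJordanDecomposition.negPart with hn
  have hμ : ∀ (B : Set X), MeasurableSet B → μ B = (p B).toReal - (n B).toReal := by
    intro B hB
    conv_lhs => rw [← μ.toSignedMeasure_toJordanDecomposition]
    rw [JordanDecomposition.toSignedMeasure, VectorMeasure.sub_apply,
      Measure.toSignedMeasure_apply_measurable hB, Measure.toSignedMeasure_apply_measurable hB]
    rfl
  have hP := sum_meas_zero k f hf lam hzero p hA
  have hN := sum_meas_zero k f hf lam hzero n hA
  calc (∑ i, lam i * (μ (f i ⁻¹' A)))
      = ∑ i, (lam i * (p (f i ⁻¹' A)).toReal - lam i * (n (f i ⁻¹' A)).toReal) := by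
        apply Finset.sum_congr rfl
        intro i _
        rw [hμ _ ((hf i) hA), mul_sub]
    _ = (∑ i, lam i * (p (f i ⁻¹' A)).toReal) - ∑ i, lam i * (n (f i ⁻¹' A)).toReal :=
        Finset.sum_sub_distrib _ _
    _ = 0 := by rw [hP, hN, sub_zero]
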